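/- Let X ⊆ E be a closed convex subset of a finite-dimensional real normed space, let f and g be strongly convex on X with the same parameter μ > 0, and let x_* be a solution of the regular problem min{ f(x) : x ∈ X, g(x) ≤ 0 }. If a random point x̃ ∈ X satisfies E f(x̃) − f(x_*) ≤ ε and g(x̃) ≤ ε almost surely, then (μ/2)·E‖x̃ − x_*‖_E² ≤ ε. -/

import Mathlib

open MeasureTheory

/-- `p` is a subgradient of `f` at `x` relative to the set `X`. -/
def IsSubgradOn {E : Type*} [NormedAddCommGroup E] [NormedSpace ℝ E]
    (X : Set E) (f : E → ℝ) (x : E) (p : E →L[ℝ] ℝ) : Prop :=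
  ∀ y ∈ X, f x + p (y - x) ≤ f y


open Set


/-- Subgradient existence at interior points for a convex function on a
finite-dimensional normed space. -/
lemma exists_subgrad_interior {V : Type*} [NormedAddCommGroup V] [NormedSpace ℝ V]
    [FiniteDimensional ℝ V] {Y : Set V} (hY : Convex ℝ Y) {F : V → ℝ}
    (hF : ConvexOn ℝ Y F) {z : V} (hz : z ∈ interior Y) :
    ∃ p : V →L[ℝ] ℝ, ∀ u ∈ Y, F z + p (u - z) ≤ F u := by
  set U := interior Y with hU
  have hUopen : IsOpen U := isOpen_interior
  have hUY : U ⊆ Y := interior_subset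
  have hUconv : Convex ℝ U := hY.interior
  have hFU : ConvexOn ℝ U F := hF.subset hUY hUconv
  have hFc : ContinuousOn F U := hFU.continuousOn hUopen
  -- the open epigraph over U
  set C : Set (V × ℝ) := {q | q.1 ∈ U ∧ F q.1 < q.2} with hC
  have hCopen : IsOpen C := by
    have h1 : C = (U ×ˢ (univ : Set ℝ)) ∩ ((fun q : V × ℝ => F q.1 - q.2) ⁻¹' Iio 0) := by
      ext q; simp [hC, Set.mem_prod, sub_neg]
    rw [h1]
    refine ContinuousOn.isOpen_inter_preimage ?_ (hUopen.prod isOpen_univ) isOpen_Iio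
    exact (hFc.comp continuous_fst.continuousOn (fun q hq => hq.1)).sub
      continuous_snd.continuousOn
  have hCconv : Convex ℝ C := by
    rintro ⟨x1, r1⟩ ⟨hx1, hr1⟩ ⟨x2, r2⟩ ⟨hx2, hr2⟩ a b ha hb hab
    refine ⟨hUconv hx1 hx2 ha hb hab, ?_⟩
    have hF12 : F (a • x1 + b • x2) ≤ a * F x1 + b * F x2 :=
      hFU.2 hx1 hx2 ha hb hab
    rcases eq_or_lt_of_le ha with h | h
    · have hb1 : b = 1 := by linarith
      simp only [← h, hb1, zero_smul, one_smul, zero_add, zero_mul, one_mul,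
        Prod.smul_mk, Prod.mk_add_mk, smul_eq_mul] at *
      linarith
    · have h1 : a * F x1 < a * r1 := by exact (mul_lt_mul_iff_right₀ h).2 hr1
      have h2 : b * F x2 ≤ b * r2 := mul_le_mul_of_nonneg_left hr2.le hb
      simp only [Prod.smul_mk, Prod.mk_add_mk, smul_eq_mul]
      linarith
  have hznC : ((z, F z) : V × ℝ) ∉ C := fun h => lt_irrefl _ h.2
  obtain ⟨φ, hφ⟩ := geometric_hahn_banach_point_open hCconv hCopen hznC
  -- decompose φ
  set β : ℝ := φ (0, 1) with hβ
  have hsplit : ∀ x : V, ∀ r : ℝ, φ (x, r) = φ (x, 0) + r * β := by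
    intro x r
    have : (x, r) = (x, (0:ℝ)) + r • ((0:V), (1:ℝ)) := by
      simp [Prod.ext_iff]
    rw [this, map_add, _root_.map_smul, smul_eq_mul, hβ]
  have hβpos : 0 < β := by
    have h1 : ((z, F z + 1) : V × ℝ) ∈ C := ⟨hz, by show F z < F z + 1; linarith⟩
    have h2 := hφ _ h1
    rw [hsplit z (F z), hsplit z (F z + 1)] at h2
    nlinarith
  -- subgradient inequality on U
  have hsubU : ∀ x ∈ U, φ (z, 0) + F z * β ≤ φ (x, 0) + F x * β := by
    intro x hx
    have h1 : ∀ δ : ℝ, 0 < δ → φ (z, 0) + F z * β < φ (x, 0) + (F x + δ) * β := by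
      intro δ hδ
      have : ((x, F x + δ) : V × ℝ) ∈ C := ⟨hx, by show F x < F x + δ; linarith⟩
      have := hφ _ this
      rwa [hsplit z (F z), hsplit x (F x + δ)] at this
    by_contra hcon
    push_neg at hcon
    set d : ℝ := φ (z, 0) + F z * β - (φ (x, 0) + F x * β) with hd
    have hdpos : 0 < d := by simp only [hd]; linarith
    have h2 := h1 (d / (2 * β)) (by positivity)
    have h3 : d / (2 * β) * β = d / 2 := by field_simp
    nlinarith
  set p : V →L[ℝ] ℝ := (-β⁻¹) • (φ.comp (ContinuousLinearMap.inl ℝ V ℝ)) with hp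
  have hpval : ∀ v : V, p v = -β⁻¹ * φ (v, 0) := fun v => rfl
  have hsubU2 : ∀ x ∈ U, F z + p (x - z) ≤ F x := by
    intro x hx
    have h1 := hsubU x hx
    have h2 : φ (x - z, 0) = φ (x, 0) - φ (z, 0) := by
      have : ((x - z, (0:ℝ)) : V × ℝ) = (x, 0) - (z, 0) := by simp [Prod.ext_iff]
      rw [this, map_sub]
    rw [hpval, h2]
    have e : -β⁻¹ * (φ (x, 0) - φ (z, 0)) = (φ (z, 0) - φ (x, 0)) / β := by
      field_simp
      ring
    have h3 : (φ (z, 0) - φ (x, 0)) / β ≤ F x - F z := by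
      rw [div_le_iff₀ hβpos]; nlinarith
    rw [e]; linarith
  -- extend to Y using convexity
  refine ⟨p, fun u hu => ?_⟩
  have hm : (1/2 : ℝ) • z + (1/2 : ℝ) • u ∈ U :=
    hY.combo_interior_self_mem_interior hz hu (by norm_num) (by norm_num) (by norm_num)
  have h1 := hsubU2 _ hm
  have h2 : F ((1/2 : ℝ) • z + (1/2 : ℝ) • u) ≤ (1/2) * F z + (1/2) * F u :=
    hF.2 (hUY hz) hu (by norm_num) (by norm_num) (by norm_num)
  have h3 : ((1/2 : ℝ) • z + (1/2 : ℝ) • u) - z = (1/2 : ℝ) • (u - z) := by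
    module
  rw [h3, _root_.map_smul, smul_eq_mul] at h1
  linarith


lemma exists_multiplier {V : Type*} [NormedAddCommGroup V] [NormedSpace ℝ V]
    {Y : Set V} (hY : Convex ℝ Y) {F G : V → ℝ}
    (hF : ConvexOn ℝ Y F) (hG : ConvexOn ℝ Y G)
    {w0 : V} (hw0 : w0 ∈ Y) (hGw0 : G w0 < 0)
    {vs : V} (hvs : vs ∈ Y) (hGvs : G vs ≤ 0)
    (hopt : ∀ u ∈ Y, G u ≤ 0 → F vs ≤ F u) :
    ∃ lam : ℝ, 0 ≤ lam ∧ ∀ u ∈ Y, F vs ≤ F u + lam * G u := by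
  classical
  set C : Set (ℝ × ℝ) := {q | ∃ u ∈ Y, F u - F vs < q.1 ∧ G u < q.2} with hC
  have hCopen : IsOpen C := by
    have : C = ⋃ u ∈ Y, Ioi (F u - F vs) ×ˢ Ioi (G u) := by
      ext q; simp only [hC, mem_setOf_eq, mem_iUnion, Set.mem_prod, mem_Ioi]; tauto
    rw [this]
    exact isOpen_biUnion fun u _ => (isOpen_Ioi.prod isOpen_Ioi)
  have hCconv : Convex ℝ C := by
    rintro ⟨a1, b1⟩ ⟨u1, hu1, hf1, hg1⟩ ⟨a2, b2⟩ ⟨u2, hu2, hf2, hg2⟩ a b ha hb hab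
    refine ⟨a • u1 + b • u2, hY hu1 hu2 ha hb hab, ?_, ?_⟩
    · have h1 : F (a • u1 + b • u2) ≤ a * F u1 + b * F u2 := hF.2 hu1 hu2 ha hb hab
      rcases eq_or_lt_of_le ha with h | h
      · have hb1 : b = 1 := by linarith
        simp only [← h, hb1, zero_smul, one_smul, zero_add, zero_mul, one_mul,
          Prod.smul_mk, Prod.mk_add_mk, smul_eq_mul] at *
        linarith
      · have h2 : a * (F u1 - F vs) < a * a1 := (mul_lt_mul_iff_right₀ h).2 hf1
        have h3 : b * (F u2 - F vs) ≤ b * a2 := mul_le_mul_of_nonneg_left hf2.le hb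
        have h4 : a * F vs + b * F vs = F vs := by rw [← add_mul, hab, one_mul]
        simp only [Prod.smul_mk, Prod.mk_add_mk, smul_eq_mul]
        nlinarith
    · have h1 : G (a • u1 + b • u2) ≤ a * G u1 + b * G u2 := hG.2 hu1 hu2 ha hb hab
      rcases eq_or_lt_of_le ha with h | h
      · have hb1 : b = 1 := by linarith
        simp only [← h, hb1, zero_smul, one_smul, zero_add, zero_mul, one_mul,
          Prod.smul_mk, Prod.mk_add_mk, smul_eq_mul] at *
        linarith
      · have h2 : a * G u1 < a * b1 := (mul_lt_mul_iff_right₀ h).2 hg1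
        have h3 : b * G u2 ≤ b * b2 := mul_le_mul_of_nonneg_left hg2.le hb
        simp only [Prod.smul_mk, Prod.mk_add_mk, smul_eq_mul]
        linarith
  have h0nC : ((0, 0) : ℝ × ℝ) ∉ C := by
    rintro ⟨u, hu, hf, hg⟩
    have := hopt u hu (le_of_lt hg)
    have h0 : F u - F vs < 0 := hf
    linarith
  obtain ⟨φ, hφ⟩ := geometric_hahn_banach_point_open hCconv hCopen h0nC
  have hφ' : ∀ b ∈ C, 0 < φ b := fun b hb => by
    have h := hφ b hb
    rwa [show ((0, 0) : ℝ × ℝ) = (0 : ℝ × ℝ) from rfl, map_zero] at h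
  set α : ℝ := φ (1, 0) with hα
  set β : ℝ := φ (0, 1) with hβ
  have hsplit : ∀ a b : ℝ, φ (a, b) = a * α + b * β := by
    intro a b
    have : ((a, b) : ℝ × ℝ) = a • ((1:ℝ), (0:ℝ)) + b • ((0:ℝ), (1:ℝ)) := by
      simp [Prod.ext_iff]
    rw [this, map_add, _root_.map_smul, _root_.map_smul, smul_eq_mul, smul_eq_mul, hα, hβ]
  have hmemC : ∀ u ∈ Y, ∀ a b : ℝ, F u - F vs < a → G u < b → 0 < a * α + b * β := by
    intro u hu a b h1 h2
    have : ((a, b) : ℝ × ℝ) ∈ C := ⟨u, hu, h1, h2⟩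
    have := hφ' _ this
    rwa [hsplit] at this
  -- α ≥ 0
  have hαnn : 0 ≤ α := by
    by_contra h
    push_neg at h
    have hT : ∀ T : ℝ, 0 < T → 0 < T * α + (G vs + 1) * β := fun T hT =>
      hmemC vs hvs T (G vs + 1) (by linarith) (by linarith)
    have h1 := hT ((1 + |(G vs + 1) * β|) / (-α)) (div_pos (by positivity) (by linarith))
    have h2 : (1 + |(G vs + 1) * β|) / (-α) * α = -(1 + |(G vs + 1) * β|) := by
      rw [div_neg, neg_mul, div_mul_cancel₀ _ (ne_of_lt h)]
    rw [h2] at h1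
    have := le_abs_self ((G vs + 1) * β)
    linarith
  have hβnn : 0 ≤ β := by
    by_contra h
    push_neg at h
    have hT : ∀ T : ℝ, G vs < T → 0 < 1 * α + T * β := fun T hT =>
      hmemC vs hvs 1 T (by linarith) hT
    have hpos : 0 < (1 + |α|) / (-β) := div_pos (by positivity) (by linarith)
    have h1 := hT ((1 + |α|) / (-β) + |G vs| + 1) (by
      have h2 : G vs ≤ |G vs| := le_abs_self _
      linarith)
    have h2 : (1 + |α|) / (-β) * β = -(1 + |α|) := by
      rw [div_neg, neg_mul, div_mul_cancel₀ _ (ne_of_lt h)]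
    have e : 1 * α + ((1 + |α|) / (-β) + |G vs| + 1) * β
        = α + (1 + |α|) / (-β) * β + (|G vs| + 1) * β := by ring
    rw [e, h2] at h1
    have h3 : (|G vs| + 1) * β < 0 := mul_neg_of_pos_of_neg (by positivity) h
    have h4 := le_abs_self α
    linarith
  -- α > 0 from Slater
  have hαpos : 0 < α := by
    rcases eq_or_lt_of_le hαnn with h | h
    · exfalso
      have h1 := hmemC w0 hw0 (F w0 - F vs + 1) (G w0 / 2) (by linarith) (by linarith)
      rw [← h] at h1
      nlinarith
    · exact h
  refine ⟨β / α, div_nonneg hβnn (le_of_lt hαpos), fun u hu => ?_⟩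
  -- limit δ → 0
  have hkey : 0 ≤ (F u - F vs) * α + G u * β := by
    by_contra h
    push_neg at h
    set X : ℝ := (F u - F vs) * α + G u * β with hX
    have hd : ∀ δ : ℝ, 0 < δ → 0 < X + δ * (α + β) := by
      intro δ hδ
      have := hmemC u hu (F u - F vs + δ) (G u + δ) (by linarith) (by linarith)
      rw [hX]; ring_nf; ring_nf at this; linarith
    have h1 := hd (-X / (α + β + 1)) (div_pos (by linarith) (by linarith))
    have h2 : -X / (α + β + 1) * (α + β) ≤ -X := by
      rw [div_mul_eq_mul_div, div_le_iff₀ (by linarith)]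
      nlinarith
    linarith
  have hβα : β / α * α = β := div_mul_cancel₀ β (ne_of_gt hαpos)
  have h5 : 0 ≤ (F u + β / α * G u - F vs) * α := by
    have e : (F u + β / α * G u - F vs) * α = (F u - F vs) * α + G u * (β / α * α) := by
      ring
    rw [e, hβα]
    linarith
  by_contra h7
  push_neg at h7
  nlinarith [mul_neg_of_neg_of_pos (show F u + β / α * G u - F vs < 0 by linarith) hαpos]

set_option maxHeartbeats 2000000 in
lemma key_growth {V : Type*} [NormedAddCommGroup V] [NormedSpace ℝ V]
    [FiniteDimensional ℝ V] {Y : Set V} (hY : Convex ℝ Y) {F G : V → ℝ}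
    (hF : ConvexOn ℝ Y F) (hG : ConvexOn ℝ Y G) {μ : ℝ} (hμ : 0 < μ)
    (hFsc : ∀ z ∈ Y, ∀ p : V →L[ℝ] ℝ, (∀ u ∈ Y, F z + p (u - z) ≤ F u) →
       ∀ u ∈ Y, F z + p (u - z) + μ / 2 * ‖u - z‖ ^ 2 ≤ F u)
    (hGsc : ∀ z ∈ Y, ∀ p : V →L[ℝ] ℝ, (∀ u ∈ Y, G z + p (u - z) ≤ G u) →
       ∀ u ∈ Y, G z + p (u - z) + μ / 2 * ‖u - z‖ ^ 2 ≤ G u)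
    {w0 : V} (hw0 : w0 ∈ interior Y) (hGw0 : G w0 < 0)
    {vs : V} (hvs : vs ∈ Y) (hGvs : G vs ≤ 0)
    (hopt : ∀ u ∈ Y, G u ≤ 0 → F vs ≤ F u) :
    ∃ lam : ℝ, 0 ≤ lam ∧
      ∀ u ∈ Y, F vs + (1 + lam) * (μ / 2) * ‖u - vs‖ ^ 2 ≤ F u + lam * G u := by
  obtain ⟨lam, hlam0, hmin⟩ :=
    exists_multiplier hY hF hG (interior_subset hw0) hGw0 hvs hGvs hopt
  refine ⟨lam, hlam0, fun u hu => ?_⟩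
  refine le_of_forall_pos_le_add fun δ hδ => ?_
  set A : ℝ := ‖u - vs‖ with hA
  set B : ℝ := ‖w0 - vs‖ with hB
  set M : ℝ := max (F w0 + lam * G w0 - F vs) 0 with hM
  have hM0 : 0 ≤ M := le_max_right _ _
  have hA0 : 0 ≤ A := norm_nonneg _
  have hB0 : 0 ≤ B := norm_nonneg _
  set ν : ℝ := (1 + lam) * μ with hν
  have hν0 : 0 < ν := by positivity
  -- choose parameters
  set t : ℝ := min (δ / (2 * (ν * A ^ 2 + 1))) (1 / 2) with ht
  have ht0 : 0 < t := lt_min (by positivity) (by norm_num)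
  have htle : t ≤ 1 / 2 := min_le_right _ _
  have ht1 : ν * t * A ^ 2 ≤ δ / 2 := by
    have h1 : t ≤ δ / (2 * (ν * A ^ 2 + 1)) := min_le_left _ _
    have h2 : t * (2 * (ν * A ^ 2 + 1)) ≤ δ := by
      rw [← le_div_iff₀ (by positivity)]; exact h1
    nlinarith [mul_nonneg ht0.le (mul_nonneg hν0.le (sq_nonneg A))]
  set c : ℝ := min (δ / (2 * (ν * A * B + M + 1))) (1 / 2) with hc
  have hcden : 0 < ν * A * B + M + 1 := by positivity
  have hc0 : 0 < c := lt_min (by positivity) (by norm_num)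
  have hcle : c ≤ 1 / 2 := min_le_right _ _
  have hcK : c * (ν * A * B + M) ≤ δ / 2 := by
    have h1 : c ≤ δ / (2 * (ν * A * B + M + 1)) := min_le_left _ _
    have h2 : c * (2 * (ν * A * B + M + 1)) ≤ δ := by
      rw [← le_div_iff₀ (by positivity)]; exact h1
    nlinarith [mul_nonneg hc0.le (by positivity : (0:ℝ) ≤ ν * A * B + M)]
  set s : ℝ := t * c with hs
  have hs0 : 0 < s := mul_pos ht0 hc0
  have hsle : s ≤ 1 / 4 := by
    have h := mul_le_mul htle hcle hc0.le (by norm_num : (0:ℝ) ≤ 1/2)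
    rw [hs]; linarith
  have hts : 1 - t - s ≥ 0 := by linarith
  have h1s : (0:ℝ) < 1 - s := by linarith
  -- the auxiliary interior point
  set z : V := (1 - t - s) • vs + t • u + s • w0 with hzdef
  have e1 : (1 - s) * ((1 - t - s) / (1 - s)) = 1 - t - s := by field_simp
  have e2 : (1 - s) * (t / (1 - s)) = t := by field_simp
  set qq : V := ((1 - t - s) / (1 - s)) • vs + (t / (1 - s)) • u with hqq
  have hqqY : qq ∈ Y := hY hvs hu (div_nonneg hts h1s.le) (div_nonneg ht0.le h1s.le)
    (by field_simp; ring)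
  have hzq : z = s • w0 + (1 - s) • qq := by
    rw [hqq, smul_add, smul_smul, smul_smul, e1, e2, hzdef]
    module
  have hzint : z ∈ interior Y := by
    rw [hzq]
    exact hY.combo_interior_self_mem_interior hw0 hqqY hs0 (by linarith) (by ring)
  have hzY : z ∈ Y := interior_subset hzint
  -- subgradients at z
  obtain ⟨p, hp⟩ := exists_subgrad_interior hY hF hzint
  obtain ⟨q', hq'⟩ := exists_subgrad_interior hY hG hzint
  set r : V →L[ℝ] ℝ := p + lam • q' with hr
  have hrval : ∀ v : V, r v = p v + lam * q' v := fun v => rfl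
  clear_value A B M ν t c s z qq r
  clear ht hc e1 e2 hqq hzq hqqY hzint
  clear qq
  have hLsc : ∀ x ∈ Y, (F z + lam * G z) + r (x - z) + ν / 2 * ‖x - z‖ ^ 2
      ≤ F x + lam * G x := by
    intro x hx
    have h1 := hFsc z hzY p hp x hx
    have h2 := hGsc z hzY q' hq' x hx
    have h3 := mul_le_mul_of_nonneg_left h2 hlam0
    rw [mul_add, mul_add] at h3
    have e : ν / 2 * ‖x - z‖ ^ 2 = μ / 2 * ‖x - z‖ ^ 2 + lam * (μ / 2 * ‖x - z‖ ^ 2) := by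
      rw [hν]; ring
    rw [hrval, e]
    linarith
  have a1 := hLsc vs hvs
  have a2 := hLsc u hu
  have a3 : (F z + lam * G z) + r (w0 - z) ≤ F w0 + lam * G w0 := by
    have h1 := hp w0 (interior_subset hw0)
    have h2 := hq' w0 (interior_subset hw0)
    have h3 := mul_le_mul_of_nonneg_left h2 hlam0
    rw [mul_add] at h3
    rw [hrval]
    linarith
  have a4 : F vs ≤ F z + lam * G z := hmin z hzY
  have hLvs : F vs + lam * G vs ≤ F vs := by
    have hx : lam * G vs ≤ 0 := mul_nonpos_of_nonneg_of_nonpos hlam0 hGvs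
    linarith
  have hr1 : r (vs - z) ≤ 0 := by
    have hx : 0 ≤ ν / 2 * ‖vs - z‖ ^ 2 := by positivity
    linarith
  have hrM : r (w0 - z) ≤ M := by
    have := le_max_left (F w0 + lam * G w0 - F vs) 0
    linarith
  -- the vector identity
  have hid : (1 - t - s) • (vs - z) + t • (u - z) + s • (w0 - z) = (0 : V) := by
    have h1 : (1 - t - s) • (vs - z) + t • (u - z) + s • (w0 - z)
        = ((1 - t - s) • vs + t • u + s • w0) - ((1 - t - s) + t + s) • z := by
      rw [smul_sub, smul_sub, smul_sub, add_smul, add_smul]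
      abel
    rw [h1, show (1 - t - s) + t + s = (1:ℝ) by ring, one_smul, ← hzdef, sub_self]
  have happ : (1 - t - s) * r (vs - z) + t * r (u - z) + s * r (w0 - z) = 0 := by
    have h1 := congrArg r hid
    simpa [map_add, _root_.map_smul, smul_eq_mul] using h1
  have hru : -(c * M) ≤ r (u - z) := by
    have h1 : (1 - t - s) * r (vs - z) ≤ 0 := mul_nonpos_of_nonneg_of_nonpos hts hr1
    have h2 : s * r (w0 - z) ≤ s * M := mul_le_mul_of_nonneg_left hrM hs0.le
    have h4 : s * M = t * (c * M) := by rw [hs]; ring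
    have h3 : t * (-(c * M)) ≤ t * r (u - z) := by linarith only [happ, h1, h2, h4]
    exact le_of_mul_le_mul_left h3 ht0
  -- norm estimate
  set N : ℝ := ‖u - z‖ with hN
  have hN0 : 0 ≤ N := norm_nonneg _
  have hzdef2 : z = vs + (t • (u - vs) + s • (w0 - vs)) := by
    rw [hzdef, smul_sub, smul_sub, sub_smul, sub_smul, one_smul]
    abel
  have hid2 : u - vs = (u - z) + (t • (u - vs) + s • (w0 - vs)) := by
    rw [hzdef2]; abel
  have htri : A ≤ N + (t * A + s * B) := by
    have h0 : ‖(u - z) + (t • (u - vs) + s • (w0 - vs))‖ ≤ N + (t * A + s * B) := by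
      refine (norm_add_le _ _).trans ?_
      have h2 := norm_add_le (t • (u - vs)) (s • (w0 - vs))
      rw [norm_smul, norm_smul, Real.norm_eq_abs, Real.norm_eq_abs,
        abs_of_nonneg ht0.le, abs_of_nonneg hs0.le] at h2
      rw [hN, hA, hB]
      linarith
    calc A = ‖(u - z) + (t • (u - vs) + s • (w0 - vs))‖ := by
          rw [hA]; exact congrArg Norm.norm hid2
    _ ≤ N + (t * A + s * B) := h0
  have hν2 : (0:ℝ) ≤ ν / 2 := by linarith
  have hN2 : ν / 2 * A ^ 2 - ν * t * A ^ 2 - ν * s * A * B ≤ ν / 2 * N ^ 2 := by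
    have h5 : A ^ 2 - 2 * t * A ^ 2 - 2 * s * A * B ≤ N ^ 2 := by
      rcases le_or_gt 0 (A - t * A - s * B) with hcase | hcase
      · have h1 : A - t * A - s * B ≤ N := by linarith only [htri]
        have h2 : (A - t * A - s * B) ^ 2 ≤ N ^ 2 := by
          have := mul_self_le_mul_self hcase h1
          rw [← pow_two, ← pow_two] at this
          exact this
        have e : A ^ 2 - 2 * t * A ^ 2 - 2 * s * A * B
            = (A - t * A - s * B) ^ 2 - (t * A + s * B) ^ 2 := by ring
        linarith only [h2, e, sq_nonneg (t * A + s * B), sq_nonneg N]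
      · have htA : 0 ≤ t * A := mul_nonneg ht0.le hA0
        have hsB : 0 ≤ s * B := mul_nonneg hs0.le hB0
        have h0 : A - 2 * t * A - 2 * s * B ≤ 0 := by linarith only [hcase, htA, hsB]
        have h1 : A * (A - 2 * t * A - 2 * s * B) ≤ 0 :=
          mul_nonpos_of_nonneg_of_nonpos hA0 h0
        have e : A * (A - 2 * t * A - 2 * s * B) = A ^ 2 - 2 * t * A ^ 2 - 2 * s * A * B := by
          ring
        linarith only [h1, e, sq_nonneg N]
    have h6 := mul_le_mul_of_nonneg_left h5 hν2
    have e2 : ν / 2 * (A ^ 2 - 2 * t * A ^ 2 - 2 * s * A * B)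
        = ν / 2 * A ^ 2 - ν * t * A ^ 2 - ν * s * A * B := by ring
    linarith only [h6, e2]
  -- final assembly
  have hsAB : ν * s * A * B ≤ c * (ν * A * B) := by
    have hνAB : 0 ≤ ν * A * B := mul_nonneg (mul_nonneg hν0.le hA0) hB0
    have e : c * (ν * A * B) - ν * s * A * B = (1 - t) * (c * (ν * A * B)) := by
      rw [hs]; ring
    have h0 : 0 ≤ (1 - t) * (c * (ν * A * B)) :=
      mul_nonneg (by linarith) (mul_nonneg hc0.le hνAB)
    linarith only [e, h0]
  have h1 : c * M + ν * s * A * B ≤ δ / 2 := by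
    have e : c * (ν * A * B + M) = c * (ν * A * B) + c * M := by ring
    linarith only [hcK, hsAB, e]
  have hfinal : F vs + ν / 2 * A ^ 2 - δ ≤ F u + lam * G u := by
    linarith only [a2, hru, hN2, h1, ht1, a4]
  have e : (1 + lam) * (μ / 2) = ν / 2 := by rw [hν]; ring
  rw [e]
  linarith

/-- If `f` and `g` are `μ`-strongly convex on `X`, `x_*` solves the regular problem
`min {f(x) : x ∈ X, g(x) ≤ 0}`, and a random point `x̃` with values in `X` satisfies
`E f(x̃) − f(x_*) ≤ ε` and `g(x̃) ≤ ε` almost surely, then `μ/2 · E‖x̃ − x_*‖² ≤ ε`. -/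
theorem strongly_convex_exp_func_to_arg
    {E : Type*} [NormedAddCommGroup E] [NormedSpace ℝ E] [FiniteDimensional ℝ E]
    {Ω : Type*} [MeasurableSpace Ω] (P : Measure Ω) [IsProbabilityMeasure P]
    (X : Set E) (hXcl : IsClosed X) (hXconv : Convex ℝ X)
    (f g : E → ℝ) (hf : ConvexOn ℝ X f) (hg : ConvexOn ℝ X g)
    (μ : ℝ) (hμ : 0 < μ)
    (hfsc : ∀ x ∈ X, ∀ p : E →L[ℝ] ℝ, IsSubgradOn X f x p →
      ∀ y ∈ X, f x + p (y - x) + μ / 2 * ‖y - x‖ ^ 2 ≤ f y)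
    (hgsc : ∀ x ∈ X, ∀ p : E →L[ℝ] ℝ, IsSubgradOn X g x p →
      ∀ y ∈ X, g x + p (y - x) + μ / 2 * ‖y - x‖ ^ 2 ≤ g y)
    (xbar : E) (hxbar : xbar ∈ intrinsicInterior ℝ X) (hgxbar : g xbar < 0)
    (xs : E) (hxs : xs ∈ X) (hgxs : g xs ≤ 0)
    (hopt : ∀ y ∈ X, g y ≤ 0 → f xs ≤ f y)
    (ε : ℝ) (xt : Ω → E) (hxt : ∀ ω, xt ω ∈ X)
    (hint_f : Integrable (fun ω => f (xt ω)) P)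
    (hint_n : Integrable (fun ω => ‖xt ω - xs‖ ^ 2) P)
    (hfε : (∫ ω, f (xt ω) ∂P) - f xs ≤ ε)
    (hgε : ∀ᵐ ω ∂P, g (xt ω) ≤ ε) :
    μ / 2 * ∫ ω, ‖xt ω - xs‖ ^ 2 ∂P ≤ ε := by
  classical
  have hxbarX : xbar ∈ X := intrinsicInterior_subset hxbar
  set S : AffineSubspace ℝ E := affineSpan ℝ X with hS
  have hxbarS : xbar ∈ S := subset_affineSpan ℝ X hxbarX
  set D : Submodule ℝ E := S.direction with hD
  -- downstairs data
  set Y : Set D := {v : D | xbar + (v : E) ∈ X} with hY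
  set F : D → ℝ := fun v => f (xbar + (v : E)) with hF
  set G : D → ℝ := fun v => g (xbar + (v : E)) with hG
  have hcombo : ∀ (v w : D) (a b : ℝ), a + b = 1 →
      xbar + ((a • v + b • w : D) : E) = a • (xbar + (v : E)) + b • (xbar + (w : E)) := by
    intro v w a b hab
    have h1 : a • (xbar + (v : E)) + b • (xbar + (w : E))
        = (a + b) • xbar + (a • (v : E) + b • (w : E)) := by module
    rw [h1, hab, one_smul]
    push_cast
    ring_nf
  have hYconv : Convex ℝ Y := by
    intro v hv w hw a b ha hb hab
    show xbar + ((a • v + b • w : D) : E) ∈ X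
    rw [hcombo v w a b hab]
    exact hXconv hv hw ha hb hab
  have hFconv : ConvexOn ℝ Y F := by
    refine ⟨hYconv, fun v hv w hw a b ha hb hab => ?_⟩
    show f (xbar + ((a • v + b • w : D) : E)) ≤ a * f (xbar + (v : E)) + b * f (xbar + (w : E))
    rw [hcombo v w a b hab]
    exact hf.2 hv hw ha hb hab
  have hGconv : ConvexOn ℝ Y G := by
    refine ⟨hYconv, fun v hv w hw a b ha hb hab => ?_⟩
    show g (xbar + ((a • v + b • w : D) : E)) ≤ a * g (xbar + (v : E)) + b * g (xbar + (w : E))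
    rw [hcombo v w a b hab]
    exact hg.2 hv hw ha hb hab
  -- membership of translated points
  have hmemD : ∀ y ∈ X, y - xbar ∈ D := by
    intro y hy
    have h1 := AffineSubspace.vsub_mem_direction (subset_affineSpan ℝ X hy) hxbarS
    simpa [vsub_eq_sub] using h1
  have hcoe_sub : ∀ (v w : D), ((v - w : D) : E) = (v : E) - (w : E) := fun v w => rfl
  have hnorm : ∀ v : D, ‖v‖ = ‖(v : E)‖ := fun v => rfl
  -- transported strong convexity
  have hFsc' : ∀ z ∈ Y, ∀ p' : D →L[ℝ] ℝ, (∀ u ∈ Y, F z + p' (u - z) ≤ F u) →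
      ∀ u ∈ Y, F z + p' (u - z) + μ / 2 * ‖u - z‖ ^ 2 ≤ F u := by
    intro z hz p' hsub u hu
    obtain ⟨p, hpext, -⟩ := exists_extension_norm_eq D p'
    have hsubX : IsSubgradOn X f (xbar + (z : E)) p := by
      intro y hy
      set vy : D := ⟨y - xbar, hmemD y hy⟩ with hvy
      have hvyY : vy ∈ Y := by show xbar + (y - xbar) ∈ X; rwa [add_sub_cancel]
      have he : y - (xbar + (z : E)) = ((vy - z : D) : E) := by
        rw [hcoe_sub]; show y - (xbar + (z : E)) = (y - xbar) - (z : E); abel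
      rw [he, hpext]
      have h2 := hsub vy hvyY
      have h3 : F vy = f y := by show f (xbar + (y - xbar)) = f y; rw [add_sub_cancel]
      rw [h3] at h2
      exact h2
    have hzX : xbar + (z : E) ∈ X := hz
    have huX : xbar + (u : E) ∈ X := hu
    have h4 := hfsc (xbar + (z : E)) hzX p hsubX (xbar + (u : E)) huX
    have he : (xbar + (u : E)) - (xbar + (z : E)) = ((u - z : D) : E) := by
      rw [hcoe_sub]; abel
    rw [he, hpext] at h4
    rw [hnorm]
    exact h4
  have hGsc' : ∀ z ∈ Y, ∀ p' : D →L[ℝ] ℝ, (∀ u ∈ Y, G z + p' (u - z) ≤ G u) →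
      ∀ u ∈ Y, G z + p' (u - z) + μ / 2 * ‖u - z‖ ^ 2 ≤ G u := by
    intro z hz p' hsub u hu
    obtain ⟨p, hpext, -⟩ := exists_extension_norm_eq D p'
    have hsubX : IsSubgradOn X g (xbar + (z : E)) p := by
      intro y hy
      set vy : D := ⟨y - xbar, hmemD y hy⟩ with hvy
      have hvyY : vy ∈ Y := by show xbar + (y - xbar) ∈ X; rwa [add_sub_cancel]
      have he : y - (xbar + (z : E)) = ((vy - z : D) : E) := by
        rw [hcoe_sub]; show y - (xbar + (z : E)) = (y - xbar) - (z : E); abel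
      rw [he, hpext]
      have h2 := hsub vy hvyY
      have h3 : G vy = g y := by show g (xbar + (y - xbar)) = g y; rw [add_sub_cancel]
      rw [h3] at h2
      exact h2
    have hzX : xbar + (z : E) ∈ X := hz
    have huX : xbar + (u : E) ∈ X := hu
    have h4 := hgsc (xbar + (z : E)) hzX p hsubX (xbar + (u : E)) huX
    have he : (xbar + (u : E)) - (xbar + (z : E)) = ((u - z : D) : E) := by
      rw [hcoe_sub]; abel
    rw [he, hpext] at h4
    rw [hnorm]
    exact h4
  -- 0 is an interior point of Y
  have h0int : (0 : D) ∈ interior Y := by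
    rw [mem_intrinsicInterior] at hxbar
    obtain ⟨y0, hy0int, hy0coe⟩ := hxbar
    have hmemS : ∀ v : D, xbar + (v : E) ∈ affineSpan ℝ X := by
      intro v
      have h1 := AffineSubspace.vadd_mem_of_mem_direction (v.2 : (v : E) ∈ S.direction) hxbarS
      simpa [vadd_eq_add, add_comm] using h1
    set j : D → (affineSpan ℝ X : Set E) := fun v => ⟨xbar + (v : E), hmemS v⟩ with hj
    have hjcont : Continuous j :=
      Continuous.subtype_mk (continuous_const.add continuous_subtype_val) _
    have hj0 : j 0 = y0 := by
      apply Subtype.ext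
      show xbar + ((0 : D) : E) = (y0 : E)
      rw [hy0coe]; simp
    have hYj : Y = j ⁻¹' (Subtype.val ⁻¹' X) := rfl
    rw [hYj]
    refine mem_interior.2 ⟨j ⁻¹' (interior (Subtype.val ⁻¹' X)), ?_, ?_, ?_⟩
    · exact preimage_mono interior_subset
    · exact hjcont.isOpen_preimage _ isOpen_interior
    · simp only [mem_preimage, hj0]; exact hy0int
  have hG0 : G 0 < 0 := by
    show g (xbar + ((0 : D) : E)) < 0
    simpa using hgxbar
  -- the optimal point downstairs
  set vs : D := ⟨xs - xbar, hmemD xs hxs⟩ with hvs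
  have hvsY : vs ∈ Y := by show xbar + (xs - xbar) ∈ X; rwa [add_sub_cancel]
  have hFvs : F vs = f xs := by show f (xbar + (xs - xbar)) = f xs; rw [add_sub_cancel]
  have hGvs' : G vs ≤ 0 := by
    show g (xbar + (xs - xbar)) ≤ 0
    rwa [add_sub_cancel]
  have hopt' : ∀ u ∈ Y, G u ≤ 0 → F vs ≤ F u := by
    intro u hu hgu
    rw [hFvs]
    exact hopt _ hu hgu
  -- apply the key lemma
  obtain ⟨lam, hlam0, hgrow⟩ := key_growth hYconv hFconv hGconv hμ hFsc' hGsc'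
    h0int hG0 hvsY hGvs' hopt'
  -- transport back up
  have hgrowX : ∀ y ∈ X, f xs + (1 + lam) * (μ / 2) * ‖y - xs‖ ^ 2 ≤ f y + lam * g y := by
    intro y hy
    set vy : D := ⟨y - xbar, hmemD y hy⟩ with hvy
    have hvyY : vy ∈ Y := by show xbar + (y - xbar) ∈ X; rwa [add_sub_cancel]
    have h1 := hgrow vy hvyY
    have h2 : F vy = f y := by show f (xbar + (y - xbar)) = f y; rw [add_sub_cancel]
    have h3 : G vy = g y := by show g (xbar + (y - xbar)) = g y; rw [add_sub_cancel]
    have h4 : ‖vy - vs‖ = ‖y - xs‖ := by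
      rw [hnorm, hcoe_sub]
      show ‖(y - xbar) - (xs - xbar)‖ = ‖y - xs‖
      congr 1; abel
    rw [hFvs, h2, h3, h4] at h1
    exact h1
  -- integrate
  have hae : ∀ᵐ ω ∂P, (1 + lam) * (μ / 2) * ‖xt ω - xs‖ ^ 2
      ≤ f (xt ω) - f xs + lam * ε := by
    filter_upwards [hgε] with ω hω
    have h1 := hgrowX (xt ω) (hxt ω)
    have h2 : lam * g (xt ω) ≤ lam * ε := mul_le_mul_of_nonneg_left hω hlam0
    linarith
  have hintL : Integrable (fun ω => (1 + lam) * (μ / 2) * ‖xt ω - xs‖ ^ 2) P :=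
    hint_n.const_mul _
  have hintR : Integrable (fun ω => f (xt ω) - f xs + lam * ε) P :=
    (hint_f.sub (integrable_const _)).add (integrable_const _)
  have hI := integral_mono_ae hintL hintR hae
  rw [integral_const_mul] at hI
  have hint1 : Integrable (fun ω => f (xt ω) - f xs) P := hint_f.sub (integrable_const _)
  rw [integral_add hint1 (integrable_const _), integral_sub hint_f (integrable_const _)] at hI
  simp only [integral_const, measure_univ, probReal_univ, ENNReal.toReal_one, one_smul, smul_eq_mul] at hI
  -- conclude
  have hIn : (0:ℝ) ≤ ∫ ω, ‖xt ω - xs‖ ^ 2 ∂P := integral_nonneg fun ω => sq_nonneg _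
  have h5 : (1 + lam) * ((μ / 2) * ∫ ω, ‖xt ω - xs‖ ^ 2 ∂P) ≤ (1 + lam) * ε := by
    have e1 : (1 + lam) * ((μ / 2) * ∫ ω, ‖xt ω - xs‖ ^ 2 ∂P)
        = (1 + lam) * (μ / 2) * ∫ ω, ‖xt ω - xs‖ ^ 2 ∂P := by ring
    rw [e1]
    have e2 : (1 + lam) * ε = ε + lam * ε := by ring
    rw [e2]
    linarith
  exact le_of_mul_le_mul_left h5 (by linarith)
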